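/- arXiv:2207.06063 — 4 statements merged into one kernel-verified Lean document; each statement's English description precedes it below -/
import Mathlib

section
/- Let X be a topological sequence space (a linear subspace of 𝕂^ℕ* whose topology is finer than the topology of coordinatewise convergence) in which the canonical unit vectors (e_n) form a basis, and suppose the unweighted backward shift B(x_1, x_2, x_3, …) = (x_2, x_3, x_4, …) is a continuous linear operator on X. If e_n → 0 in X as n → ∞, then B is mixing. -/
open Filter Topology

/-- A continuous map `T` is (topologically) mixing. -/
def Mixing {X : Type*} [TopologicalSpace X] (T : X → X) : Prop :=
  ∀ U V : Set X, IsOpen U → IsOpen V → U.Nonempty → V.Nonempty →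
    ∃ N : ℕ, ∀ n ≥ N, (T^[n] '' U ∩ V).Nonempty

/-- If `X` is a topological sequence space (realized via the continuous injective
coordinate embedding `ι : X → 𝕜^ℕ`) in which the canonical unit vectors `e n` form a
basis, the backward shift `B` is continuous and linear on `X`, and `e n → 0`,
then `B` is mixing. -/
theorem backward_shift_mixing_of_tendsto
    {𝕜 : Type*} [RCLike 𝕜] {X : Type*} [AddCommGroup X] [Module 𝕜 X]
    [TopologicalSpace X] [IsTopologicalAddGroup X] [ContinuousSMul 𝕜 X]
    (ι : X →ₗ[𝕜] (ℕ → 𝕜)) (hinj : Function.Injective ι) (hι : Continuous ι)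
    (e : ℕ → X) (he : ∀ n, ι (e n) = Pi.single n 1)
    (hbasis : ∀ x : X, ∃! α : ℕ → 𝕜,
      Tendsto (fun N => ∑ n ∈ Finset.range N, α n • e n) atTop (𝓝 x))
    (B : X →ₗ[𝕜] X) (hBc : Continuous B) (hB : ∀ x n, ι (B x) n = ι x (n + 1))
    (h0 : Tendsto e atTop (𝓝 (0 : X))) :
    Mixing (⇑B) := by
  -- B shifts the basis vectors
  have hBe0 : B (e 0) = 0 := by
    apply hinj
    funext m
    rw [hB, he, map_zero]
    simp [Pi.single_apply]
  have hBe : ∀ k, B (e (k + 1)) = e k := by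
    intro k
    apply hinj
    funext m
    rw [hB, he, he]
    simp [Pi.single_apply]
  have hshift : ∀ n k, (B ^ n) (e (k + n)) = e k := by
    intro n
    induction n with
    | zero => simp
    | succ n ih =>
      intro k
      show (B ^ (n + 1)) (e ((k + n) + 1)) = e k
      rw [pow_succ, Module.End.mul_apply, hBe (k + n), ih]
  have hzero1 : ∀ k, (B ^ (k + 1)) (e k) = 0 := by
    intro k
    induction k with
    | zero => simpa using hBe0
    | succ k ih =>
      rw [pow_succ, Module.End.mul_apply, hBe k, ih]
  have hzero : ∀ n k, k < n → (B ^ n) (e k) = 0 := by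
    intro n k hk
    obtain ⟨m, rfl⟩ : ∃ m, n = m + (k + 1) := ⟨n - (k + 1), by omega⟩
    rw [pow_add, Module.End.mul_apply, hzero1 k, map_zero]
  intro U V hU hV hUne hVne
  obtain ⟨u0, hu0⟩ := hUne
  obtain ⟨v0, hv0⟩ := hVne
  obtain ⟨α, hα, -⟩ := hbasis u0
  obtain ⟨β, hβ, -⟩ := hbasis v0
  obtain ⟨M, hM⟩ := (hα.eventually (hU.eventually_mem hu0)).exists
  obtain ⟨K, hK⟩ := (hβ.eventually (hV.eventually_mem hv0)).exists
  set u := ∑ n ∈ Finset.range M, α n • e n with hu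
  set v := ∑ n ∈ Finset.range K, β n • e n with hv
  -- the "forward-shifted" tails tend to 0
  have htail : Tendsto (fun n => ∑ k ∈ Finset.range K, β k • e (k + n)) atTop (𝓝 0) := by
    have hsum : (0 : X) = ∑ k ∈ Finset.range K, (0 : X) := by simp
    rw [hsum]
    apply tendsto_finset_sum
    intro k _
    have h1 : Tendsto (fun n : ℕ => k + n) atTop atTop :=
      tendsto_atTop_mono (fun n => Nat.le_add_left n k) tendsto_id
    have h2 : Tendsto (fun n => e (k + n)) atTop (𝓝 0) := h0.comp h1
    simpa using h2.const_smul (β k)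
  have hUev : ∀ᶠ n in atTop, (u + ∑ k ∈ Finset.range K, β k • e (k + n)) ∈ U := by
    have ht : Tendsto (fun n => u + ∑ k ∈ Finset.range K, β k • e (k + n)) atTop (𝓝 u) := by
      simpa using (tendsto_const_nhds.add htail)
    exact ht.eventually (hU.eventually_mem hM)
  obtain ⟨N1, hN1⟩ := eventually_atTop.mp hUev
  refine ⟨max N1 M, fun n hn => ?_⟩
  set p := u + ∑ k ∈ Finset.range K, β k • e (k + n) with hp
  have hpU : p ∈ U := hN1 n (le_trans (le_max_left _ _) hn)
  have h1 : (B ^ n) u = 0 := by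
    rw [hu, map_sum]
    apply Finset.sum_eq_zero
    intro k hk
    rw [map_smul, hzero n k (lt_of_lt_of_le (Finset.mem_range.mp hk)
      (le_trans (le_max_right _ _) hn)), smul_zero]
  have h2 : (B ^ n) (∑ k ∈ Finset.range K, β k • e (k + n)) = v := by
    rw [map_sum, hv]
    exact Finset.sum_congr rfl fun k _ => by rw [map_smul, hshift n k]
  have hBp : B^[n] p = v := by
    rw [← Module.End.pow_apply, hp, map_add, h1, h2, zero_add]
  exact ⟨v, ⟨p, hpU, hBp⟩, hK⟩
end

section
/- Let X be a barrelled topological sequence space in which the canonical unit vectors (e_n) form a basis, and suppose the unweighted backward shift B(x_1, x_2, x_3, …) = (x_2, x_3, x_4, …) is a continuous linear operator on X. If B is mixing, then e_n → 0 in X as n → ∞. -/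
open Filter Topology

/-- A barrel: a closed, balanced, convex, absorbing set. -/
def IsBarrelS (𝕜 : Type*) {X : Type*} [RCLike 𝕜] [AddCommGroup X] [Module 𝕜 X]
    [TopologicalSpace X] (A : Set X) : Prop :=
  IsClosed A ∧ (∀ t : 𝕜, ‖t‖ ≤ 1 → ∀ a ∈ A, t • a ∈ A) ∧
    (∀ a ∈ A, ∀ b ∈ A, ∀ s t : ℝ, 0 ≤ s → 0 ≤ t → s + t = 1 →
      (s : 𝕜) • a + (t : 𝕜) • b ∈ A) ∧
    (∀ x : X, ∃ ε > (0 : ℝ), ∀ t : 𝕜, ‖t‖ < ε → t • x ∈ A)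

/-- If `X` is a barrelled topological sequence space in which the unit vectors form a
basis and the backward shift `B` is a mixing continuous linear operator, then `e n → 0`. -/
theorem tendsto_of_backward_shift_mixing
    {𝕜 : Type*} [RCLike 𝕜] {X : Type*} [AddCommGroup X] [Module 𝕜 X]
    [TopologicalSpace X] [IsTopologicalAddGroup X] [ContinuousSMul 𝕜 X]
    -- X is locally convex:
    (hlc : ∀ U ∈ 𝓝 (0 : X), ∃ C ∈ 𝓝 (0 : X), C ⊆ U ∧
      ∀ a ∈ C, ∀ b ∈ C, ∀ s t : ℝ, 0 ≤ s → 0 ≤ t → s + t = 1 →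
        (s : 𝕜) • a + (t : 𝕜) • b ∈ C)
    -- X is barrelled:
    (hbarrelled : ∀ A : Set X, IsBarrelS 𝕜 A → A ∈ 𝓝 (0 : X))
    (ι : X →ₗ[𝕜] (ℕ → 𝕜)) (hinj : Function.Injective ι) (hι : Continuous ι)
    (e : ℕ → X) (he : ∀ n, ι (e n) = Pi.single n 1)
    (hbasis : ∀ x : X, ∃! α : ℕ → 𝕜,
      Tendsto (fun N => ∑ n ∈ Finset.range N, α n • e n) atTop (𝓝 x))
    (B : X →ₗ[𝕜] X) (hBc : Continuous B) (hB : ∀ x n, ι (B x) n = ι x (n + 1))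
    (hmix : Mixing (⇑B)) :
    Tendsto e atTop (𝓝 (0 : X)) := by
  -- Step 1: pointwise convergence of the coordinate projections to 0.
  have hcoord : ∀ x : X, Tendsto (fun n => ι x n • e n) atTop (𝓝 (0 : X)) := by
    intro x
    obtain ⟨α, hα, -⟩ := hbasis x
    set S : ℕ → X := fun N => ∑ n ∈ Finset.range N, α n • e n with hSdef
    have hαx : ∀ m, α m = ι x m := by
      intro m
      have h1 : Tendsto (fun N => ι (S N) m) atTop (𝓝 (ι x m)) :=
        ((continuous_apply m).tendsto (ι x)).comp ((hι.tendsto x).comp hα)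
      have h2 : ∀ N, m < N → ι (S N) m = α m := by
        intro N hN
        have hS : ι (S N) m = ∑ n ∈ Finset.range N, α n * ((Pi.single n 1 : ℕ → 𝕜) m) := by
          simp [hSdef, map_sum, map_smul, he, Finset.sum_apply, smul_eq_mul]
        rw [hS]
        rw [Finset.sum_eq_single m]
        · simp
        · intro b _ hbm
          simp [Pi.single_apply, (Ne.symm hbm : m ≠ b)]
        · intro hm
          exact absurd (Finset.mem_range.mpr hN) hm
      have h3 : Tendsto (fun N => ι (S N) m) atTop (𝓝 (α m)) := by
        refine tendsto_const_nhds.congr' ?_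
        filter_upwards [eventually_gt_atTop m] with N hN using (h2 N hN).symm
      exact tendsto_nhds_unique h3 h1
    have h4 : Tendsto (fun n => S (n + 1) - S n) atTop (𝓝 (x - x)) :=
      (hα.comp (tendsto_add_atTop_nat 1)).sub hα
    rw [sub_self] at h4
    refine h4.congr fun n => ?_
    simp [hSdef, Finset.sum_range_succ, hαx n]
  -- the coordinate projections are continuous
  have hPc : ∀ n : ℕ, Continuous (fun x : X => ι x n • e n) := fun n =>
    ((continuous_apply n).comp hι).smul continuous_const
  -- iterates of the shift
  have hiter : ∀ (k : ℕ) (y : X) (m : ℕ), ι (B^[k] y) m = ι y (m + k) := by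
    intro k
    induction k with
    | zero => intro y m; simp
    | succ k ih =>
      intro y m
      rw [Function.iterate_succ_apply, ih (B y) m, hB]
      ring_nf
  rw [tendsto_def]
  intro s hs
  rw [mem_atTop_sets]
  -- Step 2: build a closed balanced convex neighborhood W of 0 inside s
  obtain ⟨s₁, hs₁n, hs₁c, hs₁s⟩ := exists_mem_nhds_isClosed_subset hs
  obtain ⟨C, hCn, hCs, hCconv⟩ := hlc s₁ hs₁n
  set D : Set X := balancedCore 𝕜 C with hDdef
  set W : Set X := closure D with hWdef
  have hWn : W ∈ 𝓝 (0 : X) :=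
    mem_of_superset (balancedCore_mem_nhds_zero hCn) subset_closure
  have hWs : W ⊆ s₁ :=
    closure_minimal ((balancedCore_subset C).trans hCs) hs₁c
  have hWbal : ∀ t : 𝕜, ‖t‖ ≤ 1 → ∀ a ∈ W, t • a ∈ W := fun t ht a ha =>
    ((balancedCore_balanced C).closure).smul_mem ht ha
  have hDconv : ∀ a ∈ D, ∀ b ∈ D, ∀ s t : ℝ, 0 ≤ s → 0 ≤ t → s + t = 1 →
      (s : 𝕜) • a + (t : 𝕜) • b ∈ D := by
    have h0C : (0 : X) ∈ C := mem_of_mem_nhds hCn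
    intro a ha b hb u v hu hv huv
    rw [hDdef, balancedCore_eq_iInter h0C] at *
    simp only [Set.mem_iInter] at ha hb ⊢
    intro r hr
    obtain ⟨a', ha', rfl⟩ := ha r hr
    obtain ⟨b', hb', rfl⟩ := hb r hr
    refine ⟨(u : 𝕜) • a' + (v : 𝕜) • b', hCconv a' ha' b' hb' u v hu hv huv, ?_⟩
    show r • ((u : 𝕜) • a' + (v : 𝕜) • b') = (u : 𝕜) • r • a' + (v : 𝕜) • r • b'
    rw [smul_add, smul_comm r, smul_comm r]
  have hWconv : ∀ a ∈ W, ∀ b ∈ W, ∀ s t : ℝ, 0 ≤ s → 0 ≤ t → s + t = 1 →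
      (s : 𝕜) • a + (t : 𝕜) • b ∈ W := by
    intro a ha b hb u v hu hv huv
    refine map_mem_closure₂ (f := fun p q : X => (u : 𝕜) • p + (v : 𝕜) • q) ?_ ha hb ?_
    · exact ((continuous_fst.const_smul _).add (continuous_snd.const_smul _))
    · intro p hp q hq; exact hDconv p hp q hq u v hu hv huv
  -- Step 3: the barrel
  set A : Set X := {x | ∀ n : ℕ, ι x n • e n ∈ W} with hAdef
  have hAbarrel : IsBarrelS 𝕜 A := by
    refine ⟨?_, ?_, ?_, ?_⟩
    · have : A = ⋂ n : ℕ, (fun x : X => ι x n • e n) ⁻¹' W := by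
        ext x; simp [hAdef, Set.mem_iInter]
      rw [this]
      exact isClosed_iInter fun n => isClosed_closure.preimage (hPc n)
    · intro t ht a ha n
      have : ι (t • a) n • e n = t • (ι a n • e n) := by
        rw [map_smul]; simp [mul_smul]
      rw [this]
      exact hWbal t ht _ (ha n)
    · intro a ha b hb u v hu hv huv n
      have h1 : ι ((u : 𝕜) • a + (v : 𝕜) • b) n = (u : 𝕜) * ι a n + (v : 𝕜) * ι b n := by
        rw [map_add, map_smul, map_smul, Pi.add_apply, Pi.smul_apply, Pi.smul_apply,
          smul_eq_mul, smul_eq_mul]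
      rw [h1, add_smul, mul_smul, mul_smul]
      exact hWconv _ (ha n) _ (hb n) u v hu hv huv
    · intro x
      have hev : ∀ᶠ n in atTop, ι x n • e n ∈ W := (hcoord x).eventually_mem hWn
      obtain ⟨M, hM⟩ := eventually_atTop.mp hev
      -- absorb the finitely many remaining points
      have habs : ∀ m : ℕ, ∃ ε > (0 : ℝ), ∀ t : 𝕜, ‖t‖ < ε →
          ∀ n < m, t • (ι x n • e n) ∈ W := by
        intro m
        induction m with
        | zero => exact ⟨1, one_pos, fun t _ n hn => absurd hn (Nat.not_lt_zero n)⟩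
        | succ m ih =>
          obtain ⟨ε, hε, hεW⟩ := ih
          have hc : Tendsto (fun t : 𝕜 => t • (ι x m • e m)) (𝓝 0) (𝓝 (0 : X)) := by
            have := (continuous_id.smul (continuous_const :
              Continuous fun _ : 𝕜 => ι x m • e m)).tendsto (0 : 𝕜)
            have h' : Tendsto (fun t : 𝕜 => t • (ι x m • e m))
              (𝓝 0) (𝓝 ((0 : 𝕜) • (ι x m • e m))) := this
            simpa only [zero_smul] using h'
          obtain ⟨ε', hε', hε'W⟩ := Metric.mem_nhds_iff.mp (hc hWn)
          refine ⟨min ε ε', lt_min hε hε', fun t ht n hn => ?_⟩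
          rcases Nat.lt_succ_iff_lt_or_eq.mp hn with hn | rfl
          · exact hεW t (ht.trans_le (min_le_left _ _)) n hn
          · exact hε'W (mem_ball_zero_iff.mpr (ht.trans_le (min_le_right _ _)))
      obtain ⟨ε, hε, hεW⟩ := habs M
      refine ⟨min ε 1, lt_min hε one_pos, fun t ht => ?_⟩
      intro n
      have heq : ι (t • x) n • e n = t • (ι x n • e n) := by
        rw [map_smul]; simp [mul_smul]
      rw [heq]
      rcases lt_or_ge n M with hn | hn
      · exact hεW t (ht.trans_le (min_le_left _ _)) n hn
      · exact hWbal t (le_of_lt (ht.trans_le (min_le_right _ _))) _ (hM n hn)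
  have hAnhds : A ∈ 𝓝 (0 : X) := hbarrelled A hAbarrel
  -- Step 4: apply mixing
  set U : Set X := interior A with hUdef
  have hUopen : IsOpen U := isOpen_interior
  have hU0 : (0 : X) ∈ U := mem_interior_iff_mem_nhds.mpr hAnhds
  set V : Set X := {x : X | 1 < ‖ι x 0‖} with hVdef
  have hVopen : IsOpen V :=
    isOpen_lt continuous_const (continuous_norm.comp ((continuous_apply 0).comp hι))
  have hVne : V.Nonempty := by
    refine ⟨(2 : 𝕜) • e 0, ?_⟩
    have : ι ((2 : 𝕜) • e 0) 0 = 2 := by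
      rw [map_smul]; simp [he]
    simp only [hVdef, Set.mem_setOf_eq, this]
    norm_num
  obtain ⟨N, hN⟩ := hmix U V hUopen hVopen ⟨0, hU0⟩ hVne
  refine ⟨N, fun n hn => ?_⟩
  obtain ⟨v, ⟨u, huU, rfl⟩, hvV⟩ := hN n hn
  have huA : u ∈ A := interior_subset huU
  have hc1 : 1 < ‖ι u n‖ := by
    have : ι (B^[n] u) 0 = ι u n := by rw [hiter]; ring_nf
    simpa [hVdef, this] using hvV
  set c : 𝕜 := ι u n with hcdef
  have hc0 : c ≠ 0 := by
    intro h
    rw [h, norm_zero] at hc1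
    exact absurd hc1 (by norm_num)
  have : e n = c⁻¹ • (c • e n) := by
    rw [smul_smul, inv_mul_cancel₀ hc0, one_smul]
  show e n ∈ s
  rw [this]
  have hinv : ‖c⁻¹‖ ≤ 1 := by
    rw [norm_inv]
    exact inv_le_one_of_one_le₀ (le_of_lt hc1)
  exact hs₁s (hWs (hWbal c⁻¹ hinv _ (huA n)))
end

section
/- Let X be a barrelled topological sequence space in which the canonical unit vectors (e_n) form a basis, and suppose the unweighted backward shift B(x_1, x_2, x_3, …) = (x_2, x_3, x_4, …) is a continuous linear operator on X. Then B is mixing if and only if e_n → 0 in X as n → ∞. -/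
open Filter Topology
open Pointwise

section Helpers
variable {𝕜 : Type*} [RCLike 𝕜] {X : Type*} [AddCommGroup X] [Module 𝕜 X]
  [TopologicalSpace X] [IsTopologicalAddGroup X] [ContinuousSMul 𝕜 X]

/-- Every neighborhood of zero contains a balanced neighborhood of zero. -/
lemma aux_balanced_nhd (W : Set X) (hW : W ∈ 𝓝 (0 : X)) :
    ∃ D ∈ 𝓝 (0 : X), D ⊆ W ∧ ∀ t : 𝕜, ‖t‖ ≤ 1 → ∀ a ∈ D, t • a ∈ D := by
  have hc : Continuous fun p : 𝕜 × X => p.1 • p.2 := continuous_smul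
  have h0 : (fun p : 𝕜 × X => p.1 • p.2) ⁻¹' W ∈ 𝓝 ((0 : 𝕜), (0 : X)) := by
    apply hc.continuousAt.preimage_mem_nhds
    simpa using hW
  rw [nhds_prod_eq, Filter.mem_prod_iff] at h0
  obtain ⟨S, hS, V, hV, hSV⟩ := h0
  obtain ⟨ε, hε, hball⟩ := Metric.mem_nhds_iff.mp hS
  refine ⟨{y | ∃ t : 𝕜, ∃ v ∈ V, ‖t‖ ≤ ε / 2 ∧ y = t • v}, ?_, ?_, ?_⟩
  · have hc2 : ((ε / 2 : ℝ) : 𝕜) ≠ 0 := by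
      simp only [ne_eq, RCLike.ofReal_eq_zero]
      linarith
    have h1 : ((ε / 2 : ℝ) : 𝕜) • V ∈ 𝓝 (0 : X) :=
      (set_smul_mem_nhds_zero_iff (α := X) hc2).mpr hV
    refine Filter.mem_of_superset h1 ?_
    rintro y ⟨v, hv, rfl⟩
    exact ⟨_, v, hv, by rw [RCLike.norm_ofReal]; rw [abs_of_nonneg (by linarith)], rfl⟩
  · rintro y ⟨t, v, hv, ht, rfl⟩
    have : t ∈ Metric.ball (0 : 𝕜) ε := by
      rw [Metric.mem_ball, dist_zero_right]; linarith
    exact hSV (Set.mk_mem_prod (hball this) hv)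
  · rintro s hs y ⟨t, v, hv, ht, rfl⟩
    refine ⟨s * t, v, hv, ?_, (mul_smul s t v).symm⟩
    calc ‖s * t‖ = ‖s‖ * ‖t‖ := norm_mul s t
      _ ≤ 1 * (ε / 2) := mul_le_mul hs ht (norm_nonneg t) zero_le_one
      _ = ε / 2 := one_mul _

/-- Under local convexity, every neighborhood of zero contains a closed, balanced,
convex neighborhood of zero. -/
lemma aux_cbc_nhd
    (hlc : ∀ U ∈ 𝓝 (0 : X), ∃ C ∈ 𝓝 (0 : X), C ⊆ U ∧
      ∀ a ∈ C, ∀ b ∈ C, ∀ s t : ℝ, 0 ≤ s → 0 ≤ t → s + t = 1 →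
        (s : 𝕜) • a + (t : 𝕜) • b ∈ C)
    (W : Set X) (hW : W ∈ 𝓝 (0 : X)) :
    ∃ D ∈ 𝓝 (0 : X), D ⊆ W ∧ IsClosed D ∧
      (∀ t : 𝕜, ‖t‖ ≤ 1 → ∀ a ∈ D, t • a ∈ D) ∧
      (∀ a ∈ D, ∀ b ∈ D, ∀ s t : ℝ, 0 ≤ s → 0 ≤ t → s + t = 1 →
        (s : 𝕜) • a + (t : 𝕜) • b ∈ D) := by
  obtain ⟨V, hV, hVadd⟩ := exists_nhds_zero_half hW
  set W₁ : Set X := V ∩ (-V) with hW₁def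
  have hW₁ : W₁ ∈ 𝓝 (0 : X) := Filter.inter_mem hV (neg_mem_nhds_zero X hV)
  have hW₁V : W₁ ⊆ V := Set.inter_subset_left
  have hW₁neg : ∀ w ∈ W₁, -w ∈ W₁ := by
    rintro w ⟨h1, h2⟩
    exact ⟨Set.mem_neg.mp h2, by simpa using h1⟩
  obtain ⟨C, hC, hCW₁, hconv⟩ := hlc W₁ hW₁
  have h0C : (0 : X) ∈ C := mem_of_mem_nhds hC
  obtain ⟨E, hE, hEC, hEbal⟩ := aux_balanced_nhd (𝕜 := 𝕜) C hC
  set D₀ : Set X := {x | ∀ t : 𝕜, ‖t‖ = 1 → t • x ∈ C} with hD₀def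
  have hED₀ : E ⊆ D₀ := fun x hx t ht => hEC (hEbal t (le_of_eq ht) x hx)
  have hD₀C : D₀ ⊆ C := fun x hx => by simpa using hx 1 (by simp)
  have hD₀conv : ∀ a ∈ D₀, ∀ b ∈ D₀, ∀ s t : ℝ, 0 ≤ s → 0 ≤ t → s + t = 1 →
      (s : 𝕜) • a + (t : 𝕜) • b ∈ D₀ := by
    intro a ha b hb s t hs ht hst u hu
    have : u • ((s : 𝕜) • a + (t : 𝕜) • b) = (s : 𝕜) • (u • a) + (t : 𝕜) • (u • b) := by
      rw [smul_add, smul_comm u ((s:𝕜)) a, smul_comm u ((t:𝕜)) b]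
    rw [this]
    exact hconv _ (ha u hu) _ (hb u hu) s t hs ht hst
  have hD₀bal : ∀ s : 𝕜, ‖s‖ ≤ 1 → ∀ x ∈ D₀, s • x ∈ D₀ := by
    intro s hs x hx t ht
    rcases eq_or_ne s 0 with rfl | hs0
    · simpa using h0C
    · set r : ℝ := ‖s‖ with hr
      have hr0 : 0 < r := norm_pos_iff.mpr hs0
      set u : 𝕜 := ((r : 𝕜))⁻¹ * s with hu
      have hru : s = (r : 𝕜) * u := by
        rw [hu, ← mul_assoc, mul_inv_cancel₀ (by simpa [RCLike.ofReal_eq_zero] using hr0.ne'), one_mul]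
      have hun : ‖t * u‖ = 1 := by
        rw [norm_mul, ht, one_mul, hu, norm_mul, norm_inv, RCLike.norm_ofReal,
          abs_of_pos hr0, inv_mul_cancel₀ hr0.ne']
      have h1 : (t * u) • x ∈ C := hx _ hun
      have h2 : (r : 𝕜) • ((t * u) • x) + ((1 - r : ℝ) : 𝕜) • (0 : X) ∈ C :=
        hconv _ h1 _ h0C r (1 - r) hr0.le (by linarith) (by ring)
      have : t • (s • x) = (r : 𝕜) • ((t * u) • x) + ((1 - r : ℝ) : 𝕜) • (0 : X) := by
        rw [smul_zero, add_zero, smul_smul, smul_smul, hru]; ring_nf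
      rw [this]
      exact h2
  refine ⟨closure D₀, Filter.mem_of_superset hE (hED₀.trans subset_closure), ?_, isClosed_closure,
    ?_, ?_⟩
  · -- closure D₀ ⊆ W
    intro x hx
    have hnb : {y : X | -x + y ∈ W₁} ∈ 𝓝 x := by
      have hcont : Continuous fun y : X => -x + y := continuous_const.add continuous_id
      have := hcont.continuousAt (x := x).preimage_mem_nhds (by simpa using hW₁)
      exact this
    obtain ⟨d, hd1, hd2⟩ := mem_closure_iff_nhds.mp hx _ hnb
    -- hd1 : -x + d ∈ W₁, hd2 : d ∈ D₀
    have hxd : x - d ∈ W₁ := by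
      have := hW₁neg _ hd1
      simpa [neg_add_rev, sub_eq_add_neg, add_comm] using this
    have : x = d + (x - d) := by abel
    rw [this]
    exact hVadd _ (hW₁V (hCW₁ (hD₀C hd2))) _ (hW₁V hxd)
  · -- balanced
    intro t ht a ha
    have h1 : t • a ∈ (fun y => t • y) '' closure D₀ := ⟨a, ha, rfl⟩
    have h2 := image_closure_subset_closure_image (f := fun y : X => t • y)
      (continuous_const_smul t) (s := D₀)
    have h3 : (fun y : X => t • y) '' D₀ ⊆ D₀ := by
      rintro _ ⟨y, hy, rfl⟩; exact hD₀bal t ht y hy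
    exact closure_mono h3 (h2 h1)
  · -- convex
    intro a ha b hb s t hs ht hst
    set φ : X × X → X := fun p => (s : 𝕜) • p.1 + (t : 𝕜) • p.2 with hφ
    have hφc : Continuous φ := ((continuous_const_smul _).comp continuous_fst).add
      ((continuous_const_smul _).comp continuous_snd)
    have hab : (a, b) ∈ closure (D₀ ×ˢ D₀) := by
      rw [closure_prod_eq]; exact ⟨ha, hb⟩
    have h1 : φ (a, b) ∈ φ '' closure (D₀ ×ˢ D₀) := ⟨(a, b), hab, rfl⟩
    have h2 := image_closure_subset_closure_image hφc (s := D₀ ×ˢ D₀)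
    have h3 : φ '' (D₀ ×ˢ D₀) ⊆ D₀ := by
      rintro _ ⟨⟨p, q⟩, ⟨hp, hq⟩, rfl⟩
      exact hD₀conv p hp q hq s t hs ht hst
    exact closure_mono h3 (h2 h1)

end Helpers

/-- If `X` is a barrelled topological sequence space in which the unit vectors form a
basis and the backward shift `B` is a continuous linear operator, then `B` is mixing
iff `e n → 0`. -/


theorem backward_shift_mixing_iff
    {𝕜 : Type*} [RCLike 𝕜] {X : Type*} [AddCommGroup X] [Module 𝕜 X]
    [TopologicalSpace X] [IsTopologicalAddGroup X] [ContinuousSMul 𝕜 X]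
    -- X is locally convex:
    (hlc : ∀ U ∈ 𝓝 (0 : X), ∃ C ∈ 𝓝 (0 : X), C ⊆ U ∧
      ∀ a ∈ C, ∀ b ∈ C, ∀ s t : ℝ, 0 ≤ s → 0 ≤ t → s + t = 1 →
        (s : 𝕜) • a + (t : 𝕜) • b ∈ C)
    -- X is barrelled:
    (hbarrelled : ∀ A : Set X, IsBarrelS 𝕜 A → A ∈ 𝓝 (0 : X))
    (ι : X →ₗ[𝕜] (ℕ → 𝕜)) (hinj : Function.Injective ι) (hι : Continuous ι)
    (e : ℕ → X) (he : ∀ n, ι (e n) = Pi.single n 1)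
    (hbasis : ∀ x : X, ∃! α : ℕ → 𝕜,
      Tendsto (fun N => ∑ n ∈ Finset.range N, α n • e n) atTop (𝓝 x))
    (B : X →ₗ[𝕜] X) (hBc : Continuous B) (hB : ∀ x n, ι (B x) n = ι x (n + 1))
    :
    Mixing (⇑B) ↔ Tendsto e atTop (𝓝 (0 : X)) := by
  classical
  -- coordinates of iterates of B
  have hBiter : ∀ (n : ℕ) (x : X) (j : ℕ), ι (B^[n] x) j = ι x (j + n) := by
    intro n
    induction n with
    | zero => intro x j; simp
    | succ n ih =>
      intro x j
      rw [Function.iterate_succ_apply, ih (B x) j, hB, Nat.add_assoc]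
  -- coordinates of finite sums of basis vectors
  have hsumcoord : ∀ (α : ℕ → 𝕜) (N k : ℕ),
      ι (∑ n ∈ Finset.range N, α n • e n) k = if k < N then α k else 0 := by
    intro α N k
    rw [map_sum, Finset.sum_apply]
    have h1 : ∀ n, ι (α n • e n) k = if n = k then α n else 0 := by
      intro n
      rw [map_smul, he, Pi.smul_apply, Pi.single_apply]
      rcases eq_or_ne n k with rfl | hnk
      · simp
      · simp [hnk, Ne.symm hnk]
    rw [Finset.sum_congr rfl (fun n _ => h1 n), Finset.sum_ite_eq' (Finset.range N) k α]
    simp [Finset.mem_range]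
  -- basis coefficients are the coordinates
  have hcoeff : ∀ x : X,
      Tendsto (fun N => ∑ n ∈ Finset.range N, (ι x n) • e n) atTop (𝓝 x) := by
    intro x
    obtain ⟨α, hα, -⟩ := hbasis x
    have hax : ∀ k, ι x k = α k := by
      intro k
      have h1 : Tendsto (fun N => ι (∑ n ∈ Finset.range N, α n • e n)) atTop (𝓝 (ι x)) :=
        (hι.tendsto x).comp hα
      have h2 : Tendsto (fun N => ι (∑ n ∈ Finset.range N, α n • e n) k) atTop (𝓝 (ι x k)) :=
        tendsto_pi_nhds.mp h1 k
      have h3 : (fun N => ι (∑ n ∈ Finset.range N, α n • e n) k) =ᶠ[atTop]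
          (fun _ => α k) := by
        filter_upwards [eventually_ge_atTop (k + 1)] with N hN
        rw [hsumcoord]
        simp [Nat.lt_of_succ_le hN]
      exact tendsto_nhds_unique h2 (Tendsto.congr' h3.symm tendsto_const_nhds)
    have : (fun N => ∑ n ∈ Finset.range N, (ι x n) • e n)
        = fun N => ∑ n ∈ Finset.range N, α n • e n := by
      funext N
      exact Finset.sum_congr rfl fun n _ => by rw [hax n]
    rw [this]
    exact hα
  constructor
  · -- Mixing → e n → 0
    intro hmix
    rw [tendsto_atTop']
    intro W₀ hW₀
    obtain ⟨W₁, hW₁, hhalf⟩ := exists_nhds_zero_half hW₀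
    have hW₂ : ((2 : 𝕜)⁻¹ • W₁) ∈ 𝓝 (0 : X) :=
      (set_smul_mem_nhds_zero_iff (inv_ne_zero two_ne_zero)).mpr hW₁
    obtain ⟨W', hW'n, hW'sub, hW'cl, hW'bal, hW'conv⟩ := aux_cbc_nhd hlc _ hW₂
    set S : ℕ → X → X := fun m x => ∑ k ∈ Finset.range m, ι x k • e k with hSdef
    have hScont : ∀ m, Continuous (S m) := by
      intro m
      apply continuous_finset_sum
      intro k _
      exact ((continuous_apply k).comp hι).smul continuous_const
    have hSsmul : ∀ (m : ℕ) (t : 𝕜) (x : X), S m (t • x) = t • S m x := by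
      intro m t x
      simp only [hSdef, map_smul, Pi.smul_apply, smul_eq_mul, mul_smul, Finset.smul_sum]
    have hSconv : ∀ (m : ℕ) (a b : X) (s t : 𝕜), S m (s • a + t • b)
        = s • S m a + t • S m b := by
      intro m a b s t
      simp only [hSdef, map_add, map_smul, Pi.add_apply, Pi.smul_apply, smul_eq_mul,
        add_smul, mul_smul, Finset.sum_add_distrib, Finset.smul_sum]
    have hSmem : ∀ x : X, x ∈ {x : X | ∀ m, S m x ∈ W'} ↔ ∀ m, S m x ∈ W' := fun x => Iff.rfl
    set A : Set X := {x : X | ∀ m, S m x ∈ W'} with hAdef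
    have hAnhd : A ∈ 𝓝 (0 : X) := by
      apply hbarrelled
      refine ⟨?_, ?_, ?_, ?_⟩
      · have : A = ⋂ m, (S m) ⁻¹' W' := by
          ext z
          simp [hAdef, Set.mem_iInter, Set.mem_preimage]
        rw [this]
        exact isClosed_iInter fun m => hW'cl.preimage (hScont m)
      · intro t ht a ha m
        rw [hSsmul]
        exact hW'bal t ht _ (ha m)
      · intro a ha b hb s t hs ht hst m
        rw [hSconv]
        exact hW'conv _ (ha m) _ (hb m) s t hs ht hst
      · -- absorbing
        intro x
        obtain ⟨W₄, hW₄, hhalf'⟩ := exists_nhds_zero_half hW'n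
        obtain ⟨W₃, hW₃n, hW₃sub, hW₃bal⟩ := aux_balanced_nhd (𝕜 := 𝕜) W₄ hW₄
        have htail : Tendsto (fun m => S m x - x) atTop (𝓝 (0 : X)) := by
          have := (hcoeff x).sub (tendsto_const_nhds (x := x) (f := atTop))
          simpa [hSdef] using this
        obtain ⟨M, hM⟩ := Filter.eventually_atTop.mp (htail.eventually_mem hW₃n)
        have hGx : {t : 𝕜 | t • x ∈ W₃} ∈ 𝓝 (0 : 𝕜) := by
          have hc : Continuous fun t : 𝕜 => t • x := continuous_id.smul continuous_const
          have := (hc.continuousAt (x := (0 : 𝕜))).preimage_mem_nhds (by simpa using hW₃n)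
          exact this
        have hGm : ∀ y : X, {t : 𝕜 | t • y ∈ W'} ∈ 𝓝 (0 : 𝕜) := by
          intro y
          have hc : Continuous fun t : 𝕜 => t • y := continuous_id.smul continuous_const
          have := (hc.continuousAt (x := (0 : 𝕜))).preimage_mem_nhds (by simpa using hW'n)
          exact this
        have hG : ({t : 𝕜 | t • x ∈ W₃} ∩ ⋂ m ∈ Finset.range M, {t : 𝕜 | t • S m x ∈ W'})
            ∈ 𝓝 (0 : 𝕜) :=
          Filter.inter_mem hGx ((Filter.biInter_finset_mem _).mpr fun m _ => hGm (S m x))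
        obtain ⟨ε, hε, hball⟩ := Metric.mem_nhds_iff.mp hG
        refine ⟨min ε 1, lt_min hε one_pos, fun t ht => ?_⟩
        have htε : t ∈ Metric.ball (0 : 𝕜) ε := by
          rw [mem_ball_zero_iff]
          exact lt_of_lt_of_le ht (min_le_left _ _)
        have ht1 : ‖t‖ ≤ 1 := le_of_lt (lt_of_lt_of_le ht (min_le_right _ _))
        obtain ⟨htx, htm⟩ := hball htε
        intro m
        rw [hSsmul]
        by_cases hm : m < M
        · exact Set.mem_iInter₂.mp htm m (Finset.mem_range.mpr hm)
        · have h1 : t • (S m x - x) ∈ W₃ := hW₃bal t ht1 _ (hM m (le_of_not_gt hm))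
          have h2 := hhalf' _ (hW₃sub h1) _ (hW₃sub htx)
          have h3 : t • S m x = t • (S m x - x) + t • x := by
            rw [smul_sub]
            abel
          rw [h3]
          exact h2
    set V : Set X := (fun y : X => ι y 0) ⁻¹' Metric.ball (1 : 𝕜) (1 / 2) with hVdef
    have hVopen : IsOpen V := Metric.isOpen_ball.preimage ((continuous_apply 0).comp hι)
    have hVne : V.Nonempty := by
      refine ⟨e 0, ?_⟩
      simp [hVdef, Set.mem_preimage, he, Metric.mem_ball]
    obtain ⟨N, hN⟩ := hmix (interior A) V isOpen_interior hVopen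
      ⟨0, mem_interior_iff_mem_nhds.mpr hAnhd⟩ hVne
    refine ⟨N, fun n hn => ?_⟩
    obtain ⟨z, ⟨x, hxA, hzeq⟩, hzV⟩ := hN n hn
    have hxA' : ∀ m, S m x ∈ W' := interior_subset hxA
    have hc1 : ‖ι x n - 1‖ < 1 / 2 := by
      have h0 : ι z 0 ∈ Metric.ball (1 : 𝕜) (1 / 2) := hzV
      rw [← hzeq, Metric.mem_ball, dist_eq_norm] at h0
      rwa [hBiter n x 0, Nat.zero_add] at h0
    set c : 𝕜 := ι x n with hcdef
    have hcn : (1 : ℝ) / 2 ≤ ‖c‖ := by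
      have h := norm_sub_norm_le (1 : 𝕜) c
      rw [norm_one, norm_sub_rev] at h
      linarith
    have hc0 : c ≠ 0 := by
      intro h
      rw [h, norm_zero] at hcn
      linarith
    have hcinv : ‖c⁻¹‖ ≤ 2 := by
      rw [norm_inv]
      rw [inv_le_comm₀ (lt_of_lt_of_le (by norm_num) hcn) (by norm_num)]
      linarith
    have key : ∀ d : 𝕜, ‖d‖ ≤ 2 → ∀ w ∈ W', d • w ∈ W₁ := by
      intro d hd w hw
      have hnorm : ‖(2 : 𝕜)⁻¹ * d‖ ≤ 1 := by
        rw [norm_mul, norm_inv, RCLike.norm_two]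
        nlinarith [norm_nonneg d]
      have h1 : ((2 : 𝕜)⁻¹ * d) • w ∈ W' := hW'bal _ hnorm w hw
      have h2 : (2 : 𝕜)⁻¹ • (d • w) ∈ (2 : 𝕜)⁻¹ • W₁ := by
        rw [← mul_smul]
        exact hW'sub h1
      exact (Set.smul_mem_smul_set_iff₀ (inv_ne_zero (two_ne_zero)) W₁ (d • w)).mp h2
    have hen : e n = c⁻¹ • S (n + 1) x + (-c⁻¹) • S n x := by
      have hstep : S (n + 1) x = S n x + c • e n := by
        simp [hSdef, Finset.sum_range_succ, hcdef]
      rw [hstep, smul_add, smul_smul, inv_mul_cancel₀ hc0, one_smul, neg_smul]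
      abel
    rw [hen]
    exact hhalf _ (key c⁻¹ hcinv _ (hxA' (n + 1))) _ (key (-c⁻¹) (by rwa [norm_neg]) _ (hxA' n))
  · -- e n → 0 → Mixing
    intro he0 U V hU hV hUne hVne
    obtain ⟨x, hx⟩ := hUne
    obtain ⟨y, hy⟩ := hVne
    obtain ⟨M, hM⟩ := ((hcoeff x).eventually_mem (hU.mem_nhds hx)).exists
    obtain ⟨K, hK⟩ := ((hcoeff y).eventually_mem (hV.mem_nhds hy)).exists
    set x' : X := ∑ k ∈ Finset.range M, ι x k • e k with hx'def
    set y' : X := ∑ k ∈ Finset.range K, ι y k • e k with hy'def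
    set T : ℕ → X := fun n => ∑ k ∈ Finset.range K, ι y k • e (k + n) with hTdef
    have hT : Tendsto T atTop (𝓝 (0 : X)) := by
      have h0 : (0 : X) = ∑ k ∈ Finset.range K, (0 : X) := by simp
      rw [hTdef, h0]
      apply tendsto_finset_sum
      intro k _
      have h1 : Tendsto (fun n : ℕ => e (k + n)) atTop (𝓝 (0 : X)) :=
        he0.comp (tendsto_atTop_mono (fun n => Nat.le_add_left n k) tendsto_id)
      simpa using h1.const_smul (ι y k)
    have hz : Tendsto (fun n => x' + T n) atTop (𝓝 x') := by
      have := (tendsto_const_nhds (x := x') (f := atTop (α := ℕ))).add hT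
      simpa using this
    obtain ⟨N₁, hN₁⟩ := Filter.eventually_atTop.mp (hz.eventually_mem (hU.mem_nhds hM))
    refine ⟨max N₁ M, fun n hn => ?_⟩
    have hnN₁ : N₁ ≤ n := le_trans (le_max_left _ _) hn
    have hnM : M ≤ n := le_trans (le_max_right _ _) hn
    refine ⟨B^[n] (x' + T n), ⟨x' + T n, hN₁ n hnN₁, rfl⟩, ?_⟩
    have hpow : ∀ z : X, B^[n] z = (B ^ n) z := fun z => (Module.End.pow_apply B n z).symm
    have hkey : B^[n] (x' + T n) = y' := by
      rw [hpow, map_add]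
      have h1 : (B ^ n) x' = 0 := by
        rw [hx'def, map_sum]
        apply Finset.sum_eq_zero
        intro k hk
        rw [map_smul]
        have h2 : (B ^ n) (e k) = 0 := by
          apply hinj
          rw [map_zero]
          funext j
          rw [Module.End.pow_apply, hBiter, he]
          have : j + n ≠ k := by
            have := Finset.mem_range.mp hk
            omega
          simp [Pi.single_apply, this]
        rw [h2, smul_zero]
      have h3 : (B ^ n) (T n) = y' := by
        rw [hTdef, map_sum, hy'def]
        apply Finset.sum_congr rfl
        intro k _
        rw [map_smul]
        congr 1
        apply hinj
        funext j
        rw [Module.End.pow_apply, hBiter, he, he]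
        rcases eq_or_ne j k with rfl | hjk
        · simp [Pi.single_apply]
        · have h4 : j + n ≠ k + n := by omega
          simp [Pi.single_apply, hjk, h4]
      rw [h1, h3, zero_add]
    rw [hkey]
    exact hK
end

section
/- Let X be a barrelled topological sequence space in which the canonical unit vectors (e_n) form a basis, let (w_n) be a sequence of nonzero scalars, and suppose the weighted backward shift B_w(x_1, x_2, x_3, …) = (w_2 x_2, w_3 x_3, w_4 x_4, …) is a continuous linear operator on X. Then B_w is mixing if and only if (∏_{i=1}^{n} w_i)^{-1} e_n → 0 in X as n → ∞. -/
open Filter Topology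
open scoped Pointwise

/-- If `X` is a barrelled topological sequence space in which the unit vectors form a
basis and the weighted backward shift `B_w` is a continuous linear operator, then `B_w`
is mixing iff `(∏ w_i)⁻¹ • e n → 0`. -/
theorem weighted_backward_shift_mixing_iff
    {𝕜 : Type*} [RCLike 𝕜] {X : Type*} [AddCommGroup X] [Module 𝕜 X]
    [TopologicalSpace X] [IsTopologicalAddGroup X] [ContinuousSMul 𝕜 X]
    -- X is locally convex:
    (hlc : ∀ U ∈ 𝓝 (0 : X), ∃ C ∈ 𝓝 (0 : X), C ⊆ U ∧
      ∀ a ∈ C, ∀ b ∈ C, ∀ s t : ℝ, 0 ≤ s → 0 ≤ t → s + t = 1 →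
        (s : 𝕜) • a + (t : 𝕜) • b ∈ C)
    -- X is barrelled:
    (hbarrelled : ∀ A : Set X, IsBarrelS 𝕜 A → A ∈ 𝓝 (0 : X))
    (ι : X →ₗ[𝕜] (ℕ → 𝕜)) (hinj : Function.Injective ι) (hι : Continuous ι)
    (e : ℕ → X) (he : ∀ n, ι (e n) = Pi.single n 1)
    (hbasis : ∀ x : X, ∃! α : ℕ → 𝕜,
      Tendsto (fun N => ∑ n ∈ Finset.range N, α n • e n) atTop (𝓝 x))
    (w : ℕ → 𝕜) (hw : ∀ n, w n ≠ 0)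
    (B : X →ₗ[𝕜] X) (hBc : Continuous B)
    (hB : ∀ x n, ι (B x) n = w (n + 1) * ι x (n + 1))
    :
    Mixing (⇑B) ↔
      Tendsto (fun n => (∏ i ∈ Finset.range n, w (i + 1))⁻¹ • e n) atTop (𝓝 (0 : X)) := by
  classical
  set Pw : ℕ → 𝕜 := fun n => ∏ i ∈ Finset.range n, w (i + 1) with hPwdef
  have hPw_ne : ∀ n, Pw n ≠ 0 := fun n => Finset.prod_ne_zero_iff.2 fun i _ => hw _
  have hcoord : ∀ m : ℕ, Continuous fun x : X => ι x m := fun m => (continuous_apply m).comp hι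
  have hem : ∀ n m : ℕ, ι (e n) m = if m = n then 1 else 0 := by
    intro n m; rw [he]; simp [Pi.single_apply]
  have hBe0 : B (e 0) = 0 := by
    apply hinj; rw [map_zero]; funext m
    rw [hB, hem]; simp
  have hBe : ∀ m, B (e (m + 1)) = w (m + 1) • e m := by
    intro m; apply hinj; rw [map_smul]; funext n
    rw [hB, hem]
    by_cases h : n = m <;> simp [hem, h]
  have hpow : ∀ (n : ℕ) (x : X), B^[n] x = (B ^ n) x := fun n x =>
    (Module.End.pow_apply B n x).symm
  have hBn_e : ∀ (n k : ℕ), (B ^ n) (e (k + n)) = (∏ i ∈ Finset.range n, w (k + i + 1)) • e k := by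
    intro n
    induction n with
    | zero => intro k; simp
    | succ n ih =>
      intro k
      have h1 : k + (n + 1) = (k + n) + 1 := by ring
      rw [pow_succ, Module.End.mul_apply, h1, hBe, map_smul, ih, Finset.prod_range_succ,
        smul_smul, mul_comm]
  have hBn_e0 : ∀ (n k : ℕ), k < n → (B ^ n) (e k) = 0 := by
    intro n k hkn
    obtain ⟨j, rfl⟩ : ∃ j, n = j + (k + 1) := ⟨n - (k + 1), by omega⟩
    rw [pow_add, Module.End.mul_apply]
    have h1 : (B ^ (k + 1)) (e k) = 0 := by
      rw [pow_succ', Module.End.mul_apply]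
      have : e k = e (0 + k) := by rw [zero_add]
      rw [this, hBn_e, map_smul, hBe0, smul_zero]
    rw [h1, map_zero]
  have halpha : ∀ x : X, Tendsto (fun N => ∑ n ∈ Finset.range N, ι x n • e n) atTop (𝓝 x) := by
    intro x
    obtain ⟨α, hα, -⟩ := hbasis x
    have hcoef : ∀ m, α m = ι x m := by
      intro m
      have h1 : Tendsto (fun N => ι (∑ n ∈ Finset.range N, α n • e n) m) atTop (𝓝 (ι x m)) :=
        ((hcoord m).tendsto x).comp hα
      have h2 : ∀ N, m < N → ι (∑ n ∈ Finset.range N, α n • e n) m = α m := by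
        intro N hN
        rw [map_sum, Finset.sum_apply]
        simp only [map_smul, Pi.smul_apply, hem, smul_eq_mul, mul_ite, mul_one, mul_zero]
        rw [Finset.sum_ite_eq (Finset.range N) m α]
        simp [Finset.mem_range.mpr hN]
      have h3 : Tendsto (fun N => ι (∑ n ∈ Finset.range N, α n • e n) m) atTop (𝓝 (α m)) := by
        apply Tendsto.congr' _ tendsto_const_nhds
        filter_upwards [eventually_gt_atTop m] with N hN
        exact (h2 N hN).symm
      exact tendsto_nhds_unique h3 h1
    have : (fun N => ∑ n ∈ Finset.range N, ι x n • e n)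
        = fun N => ∑ n ∈ Finset.range N, α n • e n := by
      funext N; exact Finset.sum_congr rfl fun n _ => by rw [hcoef]
    rw [this]; exact hα
  have hD_exists : ∀ W ∈ 𝓝 (0 : X), ∃ D : Set X, D ∈ 𝓝 (0 : X) ∧ D ⊆ W ∧ IsClosed D ∧
      (∀ t : 𝕜, ‖t‖ ≤ 1 → ∀ a ∈ D, t • a ∈ D) ∧
      (∀ a ∈ D, ∀ b ∈ D, ∀ s t : ℝ, 0 ≤ s → 0 ≤ t → s + t = 1 →
        (s : 𝕜) • a + (t : 𝕜) • b ∈ D) := by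
    intro W hW
    obtain ⟨V0, hV0n, hV0c, hV0s⟩ := exists_mem_nhds_isClosed_subset hW
    obtain ⟨C, hCn, hCs, hCconv⟩ := hlc V0 hV0n
    have h0C : (0 : X) ∈ C := mem_of_mem_nhds hCn
    set Cb := balancedCore 𝕜 C with hCbdef
    have hCb_n : Cb ∈ 𝓝 (0 : X) := balancedCore_mem_nhds_zero hCn
    have hCb_bal : Balanced 𝕜 Cb := balancedCore_balanced C
    have hCb_conv : ∀ a ∈ Cb, ∀ b ∈ Cb, ∀ s t : ℝ, 0 ≤ s → 0 ≤ t → s + t = 1 →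
        (s : 𝕜) • a + (t : 𝕜) • b ∈ Cb := by
      intro a ha b hb s t hs ht hst
      rw [hCbdef, balancedCore_eq_iInter h0C] at ha hb ⊢
      simp only [Set.mem_iInter] at ha hb ⊢
      intro r hr
      obtain ⟨a', ha', rfl⟩ := ha r hr
      obtain ⟨b', hb', rfl⟩ := hb r hr
      refine ⟨(s : 𝕜) • a' + (t : 𝕜) • b', hCconv a' ha' b' hb' s t hs ht hst, ?_⟩
      show r • ((s : 𝕜) • a' + (t : 𝕜) • b') = (s : 𝕜) • r • a' + (t : 𝕜) • r • b'
      rw [smul_add, smul_comm (s : 𝕜) r, smul_comm (t : 𝕜) r]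
    refine ⟨closure Cb, mem_of_superset hCb_n subset_closure,
      ?_, isClosed_closure, ?_, ?_⟩
    · calc closure Cb ⊆ closure V0 := closure_mono (hCbdef ▸ (balancedCore_subset C).trans hCs)
        _ = V0 := hV0c.closure_eq
        _ ⊆ W := hV0s
    · intro t ht a ha
      exact hCb_bal.closure (a := t) ht ⟨a, ha, rfl⟩
    · intro a ha b hb s t hs ht hst
      have hc : Continuous fun p : X × X => (s : 𝕜) • p.1 + (t : 𝕜) • p.2 :=
        ((continuous_const.smul continuous_fst).add (continuous_const.smul continuous_snd))
      have hsub : closure Cb ×ˢ closure Cb ⊆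
          (fun p : X × X => (s : 𝕜) • p.1 + (t : 𝕜) • p.2) ⁻¹' closure Cb := by
        rw [← closure_prod_eq]
        apply closure_minimal _ (isClosed_closure.preimage hc)
        rintro ⟨a', b'⟩ ⟨ha', hb'⟩
        exact subset_closure (hCb_conv a' ha' b' hb' s t hs ht hst)
      exact hsub (Set.mk_mem_prod ha hb)
  constructor
  · -- mixing → tendsto
    intro hmix
    rw [tendsto_def]
    intro W hW
    obtain ⟨D, hDn, hDW, hDc, hDbal, hDconv⟩ := hD_exists W hW
    set A : Set X := ⋂ n : ℕ, (fun x : X => ι x n • e n) ⁻¹' D with hAdef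
    have hPcont : ∀ n : ℕ, Continuous fun x : X => ι x n • e n :=
      fun n => (hcoord n).smul continuous_const
    have hmemA : ∀ x : X, x ∈ A ↔ ∀ n, ι x n • e n ∈ D := by
      intro x; simp [hAdef, Set.mem_iInter]
    have hA_nhds : A ∈ 𝓝 (0 : X) := by
      apply hbarrelled
      refine ⟨isClosed_iInter fun n => hDc.preimage (hPcont n), ?_, ?_, ?_⟩
      · intro t ht a ha
        rw [hmemA] at ha ⊢
        intro n
        have : ι (t • a) n • e n = t • (ι a n • e n) := by
          rw [map_smul]
          show (t * ι a n) • e n = t • ι a n • e n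
          rw [smul_smul]
        rw [this]
        exact hDbal t ht _ (ha n)
      · intro a ha b hb s t hs ht hst
        rw [hmemA] at ha hb ⊢
        intro n
        have : ι ((s : 𝕜) • a + (t : 𝕜) • b) n • e n
            = (s : 𝕜) • (ι a n • e n) + (t : 𝕜) • (ι b n • e n) := by
          rw [map_add, map_smul, map_smul]
          show ((s : 𝕜) * ι a n + (t : 𝕜) * ι b n) • e n = _
          rw [add_smul, smul_smul, smul_smul]
        rw [this]
        exact hDconv _ (ha n) _ (hb n) s t hs ht hst
      · intro x
        have hQ : Tendsto (fun n : ℕ => ι x n • e n) atTop (𝓝 (0 : X)) := by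
          have h1 := halpha x
          have h2 : Tendsto (fun N => ∑ n ∈ Finset.range (N + 1), ι x n • e n) atTop (𝓝 x) :=
            h1.comp (tendsto_add_atTop_nat 1)
          have h3 := h2.sub h1
          simp only [sub_self] at h3
          refine h3.congr fun N => ?_
          rw [Finset.sum_range_succ]; abel
        have hbdd := hQ.isVonNBounded_range 𝕜
        obtain ⟨r, hr⟩ := absorbs_iff_norm.1 (hbdd hDn)
        set c : 𝕜 := ((max r 1 : ℝ) : 𝕜) with hcdef
        have hc_norm : ‖c‖ = max r 1 := by
          rw [hcdef, RCLike.norm_ofReal, abs_of_pos]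
          exact lt_of_lt_of_le one_pos (le_max_right r 1)
        have hc1 : (1 : ℝ) ≤ ‖c‖ := hc_norm ▸ le_max_right r 1
        have hc0 : (0 : ℝ) < ‖c‖ := lt_of_lt_of_le one_pos hc1
        have hsub := hr c (hc_norm ▸ le_max_left r 1)
        refine ⟨‖c‖⁻¹, inv_pos.2 hc0, fun t ht => ?_⟩
        rw [hmemA]
        intro n
        have hmem : ι x n • e n ∈ c • D := hsub ⟨n, rfl⟩
        obtain ⟨d, hd, hdc⟩ := hmem
        have : ι (t • x) n • e n = (t * c) • d := by
          rw [map_smul]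
          show (t * ι x n) • e n = _
          rw [mul_smul, ← hdc, smul_comm t c, ← mul_smul, mul_comm c t, mul_smul]
        rw [this]
        refine hDbal (t * c) ?_ d hd
        rw [norm_mul]
        calc ‖t‖ * ‖c‖ ≤ ‖c‖⁻¹ * ‖c‖ := by
              apply mul_le_mul_of_nonneg_right (le_of_lt ht) (le_of_lt hc0)
          _ = 1 := inv_mul_cancel₀ (ne_of_gt hc0)
    have hU_ne : (interior A).Nonempty := ⟨0, mem_interior_iff_mem_nhds.2 hA_nhds⟩
    have hV_open : IsOpen ((fun y : X => ι y 0) ⁻¹' Metric.ball (2 : 𝕜) 1) :=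
      Metric.isOpen_ball.preimage (hcoord 0)
    have hV_ne : ((fun y : X => ι y 0) ⁻¹' Metric.ball (2 : 𝕜) 1).Nonempty := by
      refine ⟨(2 : 𝕜) • e 0, ?_⟩
      simp only [Set.mem_preimage, map_smul, Pi.smul_apply, hem, Metric.mem_ball]
      norm_num
    obtain ⟨N, hN⟩ := hmix (interior A) _ isOpen_interior hV_open hU_ne hV_ne
    have hcoord0 : ∀ (n : ℕ) (x : X),
        ι ((B ^ n) x) 0 = (∏ i ∈ Finset.range n, w (i + 1)) * ι x n := by
      intro n
      induction n with
      | zero => intro x; simp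
      | succ n ih =>
        intro x
        rw [pow_succ, Module.End.mul_apply, ih, hB, Finset.prod_range_succ]
        ring
    rw [mem_atTop_sets]
    refine ⟨N, fun n hn => ?_⟩
    obtain ⟨v, ⟨u, huU, rfl⟩, hvV⟩ := hN n hn
    have huA : u ∈ A := interior_subset huU
    set q : 𝕜 := Pw n * ι u n with hqdef
    have hv0 : ι (B^[n] u) 0 = q := by rw [hpow]; exact hcoord0 n u
    have hq : ‖q - 2‖ < 1 := by
      have := hvV
      rw [Set.mem_preimage, Metric.mem_ball, dist_eq_norm, hv0] at this
      exact this
    have hq1 : 1 ≤ ‖q‖ := by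
      have h2 : ‖(2 : 𝕜)‖ = 2 := by norm_num
      have h3 := norm_sub_le q (q - 2)
      rw [sub_sub_cancel, h2] at h3
      linarith
    have hqne : q ≠ 0 := by
      intro h; rw [h, norm_zero] at hq1; linarith
    have hcne : ι u n ≠ 0 := by
      intro h; apply hqne; rw [hqdef, h, mul_zero]
    have hkey : (Pw n)⁻¹ • e n = q⁻¹ • (ι u n • e n) := by
      rw [smul_smul]
      congr 1
      rw [hqdef, mul_inv, mul_assoc, inv_mul_cancel₀ hcne, mul_one]
    show (Pw n)⁻¹ • e n ∈ W
    apply hDW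
    rw [hkey]
    refine hDbal q⁻¹ ?_ _ ((hmemA u).1 huA n)
    rw [norm_inv]
    exact inv_le_one_of_one_le₀ hq1
  · -- tendsto → mixing
    intro hconv
    intro U V hUo hVo hUne hVne
    obtain ⟨x, hx⟩ := hUne
    obtain ⟨y, hy⟩ := hVne
    have hxU : ∀ᶠ N in atTop, (∑ k ∈ Finset.range N, ι x k • e k) ∈ U :=
      (halpha x).eventually (hUo.mem_nhds hx)
    have hyV : ∀ᶠ N in atTop, (∑ k ∈ Finset.range N, ι y k • e k) ∈ V :=
      (halpha y).eventually (hVo.mem_nhds hy)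
    obtain ⟨M, hMx, hMy⟩ := (hxU.and hyV).exists
    set xM : X := ∑ k ∈ Finset.range M, ι x k • e k with hxMdef
    set yM : X := ∑ k ∈ Finset.range M, ι y k • e k with hyMdef
    set z : ℕ → X := fun n => xM +
      ∑ k ∈ Finset.range M, (ι y k * (∏ i ∈ Finset.range n, w (k + i + 1))⁻¹) • e (k + n)
      with hzdef
    have hsplit : ∀ k n, Pw (k + n) = Pw k * ∏ i ∈ Finset.range n, w (k + i + 1) := by
      intro k n
      show (∏ i ∈ Finset.range (k + n), w (i + 1)) = _
      rw [Finset.prod_range_add (fun i => w (i + 1)) k n]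
    have hterm : ∀ k, Tendsto
        (fun n => (ι y k * (∏ i ∈ Finset.range n, w (k + i + 1))⁻¹) • e (k + n))
        atTop (𝓝 (0 : X)) := by
      intro k
      have hkey : ∀ n, (ι y k * (∏ i ∈ Finset.range n, w (k + i + 1))⁻¹) • e (k + n)
          = (ι y k * Pw k) • ((Pw (k + n))⁻¹ • e (k + n)) := by
        intro n
        rw [smul_smul]
        congr 1
        have h1 : Pw k ≠ 0 := hPw_ne k
        rw [hsplit k n, mul_inv, mul_assoc (ι y k) (Pw k), ← mul_assoc (Pw k),
          mul_inv_cancel₀ h1, one_mul]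
      have h1 : Tendsto (fun n => (Pw (k + n))⁻¹ • e (k + n)) atTop (𝓝 (0 : X)) := by
        have h2 := hconv.comp (tendsto_add_atTop_nat k)
        refine h2.congr fun n => ?_
        simp only [Function.comp_apply]
        rw [add_comm n k]
      have h3 := h1.const_smul (ι y k * Pw k)
      rw [smul_zero] at h3
      exact h3.congr fun n => (hkey n).symm
    have hz : Tendsto z atTop (𝓝 xM) := by
      have hsum : Tendsto (fun n => ∑ k ∈ Finset.range M,
          (ι y k * (∏ i ∈ Finset.range n, w (k + i + 1))⁻¹) • e (k + n)) atTop (𝓝 (0 : X)) := by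
        have := tendsto_finset_sum (Finset.range M) (fun k _ => hterm k)
        simpa using this
      have := (tendsto_const_nhds : Tendsto (fun _ : ℕ => xM) atTop (𝓝 xM)).add hsum
      rw [add_zero] at this
      exact this
    have hzU : ∀ᶠ n in atTop, z n ∈ U := hz.eventually (hUo.mem_nhds hMx)
    obtain ⟨N2, hN2⟩ := eventually_atTop.1 hzU
    refine ⟨max N2 M, fun n hn => ?_⟩
    have hM_le : M ≤ n := le_trans (le_max_right _ _) hn
    have hBzn : B^[n] (z n) = yM := by
      rw [hpow, hzdef]
      simp only
      rw [map_add, map_sum, map_sum]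
      have h1 : ∑ k ∈ Finset.range M, (B ^ n) (ι x k • e k) = 0 := by
        apply Finset.sum_eq_zero
        intro k hk
        rw [map_smul, hBn_e0 n k (lt_of_lt_of_le (Finset.mem_range.1 hk) hM_le), smul_zero]
      have h2 : ∀ k ∈ Finset.range M,
          (B ^ n) ((ι y k * (∏ i ∈ Finset.range n, w (k + i + 1))⁻¹) • e (k + n))
          = ι y k • e k := by
        intro k _
        rw [map_smul, hBn_e, smul_smul]
        congr 1
        rw [mul_assoc, inv_mul_cancel₀, mul_one]
        exact Finset.prod_ne_zero_iff.2 fun i _ => hw _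
      rw [h1, Finset.sum_congr rfl h2, zero_add]
    refine ⟨B^[n] (z n), ⟨z n, hN2 n (le_trans (le_max_left _ _) hn), rfl⟩, ?_⟩
    rw [hBzn]
    exact hMy
end
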